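/- (Server–client memory gap under DP noise.) Consider the DP-α-NormEC iterates on a probability space (Ω, μ) driven by noise random vectors z_i^k : Ω → ℝ^d (1 ≤ i ≤ n, k ≥ 0) that are measurable, with ‖z_i^k‖² integrable, E[‖z_i^k‖²] ≤ σ² for all i, k, and E[⟨z_i^k, z_j^l⟩] = 0 whenever (i, k) ≠ (j, l). Assume the server memory is initialized consistently: ĝ⁰ = (1/n)∑_{i=1}^n g_i⁰. Then for every k ∈ ℕ: E[‖ĝ^{k+1} − (1/n)∑_{i=1}^n g_i^{k+1}‖] ≤ √(β²·(k + 1)·σ²/n). -/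

import Mathlib

open MeasureTheory
open scoped Classical

/-- Server–client memory gap under DP noise (Lemma 3): for the DP-α-NormEC iterates
driven by noise vectors with `E[‖z_i^k‖²] ≤ σ²` and pairwise-orthogonal noise, if the
server memory is initialized consistently `ĝ⁰ = (1/n)∑_i g_i⁰`, then for every `k`,
`E[‖ĝ^{k+1} − (1/n)∑_i g_i^{k+1}‖] ≤ √(β²·(k+1)·σ²/n)`. -/
theorem dp_alpha_normec_server_client_gap
    (d n : ℕ) (hn : 0 < n)
    {Ω : Type*} [MeasurableSpace Ω] (μ : Measure Ω) [IsProbabilityMeasure μ]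
    (f : Fin n → EuclideanSpace ℝ (Fin d) → ℝ)
    (hdiff : ∀ i, Differentiable ℝ (f i))
    (α β γ σ : ℝ) (hα : 0 < α) (hβ : 0 < β) (hγ : 0 < γ) (hσ : 0 ≤ σ)
    (x : ℕ → Ω → EuclideanSpace ℝ (Fin d))
    (g : Fin n → ℕ → Ω → EuclideanSpace ℝ (Fin d))
    (ghat : ℕ → Ω → EuclideanSpace ℝ (Fin d))
    (z : Fin n → ℕ → Ω → EuclideanSpace ℝ (Fin d))
    (hzmeas : ∀ i k, Measurable (z i k))
    (hzint : ∀ i k, Integrable (fun ω => ‖z i k ω‖ ^ 2) μ)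
    (hzvar : ∀ i k, ∫ ω, ‖z i k ω‖ ^ 2 ∂μ ≤ σ ^ 2)
    (hzorth : ∀ (i : Fin n) (k : ℕ) (j : Fin n) (l : ℕ), (i, k) ≠ (j, l) →
      ∫ ω, (inner ℝ (z i k ω) (z j l ω) : ℝ) ∂μ = 0)
    (hghat0 : ∀ ω, ghat 0 ω = (n : ℝ)⁻¹ • ∑ i, g i 0 ω)
    (hg : ∀ (ω : Ω) (i : Fin n) (k : ℕ), g i (k + 1) ω = g i k ω +
      β • ((α + ‖gradient (f i) (x k ω) - g i k ω‖)⁻¹ •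
        (gradient (f i) (x k ω) - g i k ω)))
    (hghat : ∀ (ω : Ω) (k : ℕ), ghat (k + 1) ω = ghat k ω +
      (β / n) • ∑ i, (((α + ‖gradient (f i) (x k ω) - g i k ω‖)⁻¹ •
        (gradient (f i) (x k ω) - g i k ω)) + z i k ω))
    (hx : ∀ (ω : Ω) (k : ℕ), x (k + 1) ω =
      if ghat (k + 1) ω = 0 then x k ω
      else x k ω - γ • ‖ghat (k + 1) ω‖⁻¹ • ghat (k + 1) ω) :
    ∀ k : ℕ, ∫ ω, ‖ghat (k + 1) ω - (n : ℝ)⁻¹ • ∑ i, g i (k + 1) ω‖ ∂μ ≤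
      Real.sqrt (β ^ 2 * (k + 1) * σ ^ 2 / n) := by
  have hn' : (0:ℝ) < (n:ℝ) := by exact_mod_cast hn
  -- Step 1: the gap equals (β/n) • (sum of noises)
  have key : ∀ (m : ℕ) (ω : Ω), ghat m ω - (n:ℝ)⁻¹ • ∑ i, g i m ω
      = (β / (n:ℝ)) • ∑ l ∈ Finset.range m, ∑ i, z i l ω := by
    intro m
    induction m with
    | zero => intro ω; simp [hghat0 ω]
    | succ m ih =>
      intro ω
      have h1 := hghat ω m
      rw [Finset.sum_add_distrib] at h1
      have h2 : ∑ i, g i (m+1) ω = (∑ i, g i m ω) +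
          β • ∑ i, ((α + ‖gradient (f i) (x m ω) - g i m ω‖)⁻¹ •
            (gradient (f i) (x m ω) - g i m ω)) := by
        rw [Finset.smul_sum, ← Finset.sum_add_distrib]
        exact Finset.sum_congr rfl fun i _ => hg ω i m
      have hgm : ghat m ω = (β / (n:ℝ)) • (∑ l ∈ Finset.range m, ∑ i, z i l ω)
          + (n:ℝ)⁻¹ • ∑ i, g i m ω := eq_add_of_sub_eq (ih ω)
      rw [h1, h2, Finset.sum_range_succ, hgm]
      module
  intro k
  -- notation for the noise sum over a flattened index set
  set P : Finset (ℕ × Fin n) := Finset.range (k+1) ×ˢ (Finset.univ : Finset (Fin n)) with hP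
  set S : Ω → EuclideanSpace ℝ (Fin d) := fun ω => ∑ p ∈ P, z p.2 p.1 ω with hS
  have hSsum : ∀ ω, (∑ l ∈ Finset.range (k+1), ∑ i, z i l ω) = S ω := by
    intro ω; simp only [hS, hP]; rw [Finset.sum_product]
  -- integrability of inner products
  have hinner_int : ∀ (i : Fin n) (l : ℕ) (j : Fin n) (m : ℕ),
      Integrable (fun ω => (inner ℝ (z i l ω) (z j m ω) : ℝ)) μ := by
    intro i l j m
    refine Integrable.mono' (((hzint i l).add (hzint j m)).div_const 2)
      ((hzmeas i l).inner (hzmeas j m)).aestronglyMeasurable ?_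
    filter_upwards with ω
    have h1 : |(inner ℝ (z i l ω) (z j m ω) : ℝ)| ≤ ‖z i l ω‖ * ‖z j m ω‖ :=
      abs_real_inner_le_norm _ _
    have h2 : ‖z i l ω‖ * ‖z j m ω‖ ≤ (‖z i l ω‖ ^ 2 + ‖z j m ω‖ ^ 2) / 2 := by
      nlinarith [sq_nonneg (‖z i l ω‖ - ‖z j m ω‖)]
    simpa [Real.norm_eq_abs] using h1.trans h2
  -- pointwise expansion of ‖S‖²
  have hpt : ∀ ω, ‖S ω‖ ^ 2 = ∑ p ∈ P, ∑ q ∈ P, (inner ℝ (z p.2 p.1 ω) (z q.2 q.1 ω) : ℝ) := by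
    intro ω
    rw [← real_inner_self_eq_norm_sq, hS]
    rw [sum_inner]
    exact Finset.sum_congr rfl fun p _ => inner_sum _ _ _
  -- integrability of ‖S‖²
  have hSsq_int : Integrable (fun ω => ‖S ω‖ ^ 2) μ := by
    have : Integrable (fun ω => ∑ p ∈ P, ∑ q ∈ P,
        (inner ℝ (z p.2 p.1 ω) (z q.2 q.1 ω) : ℝ)) μ :=
      integrable_finset_sum _ fun p _ => integrable_finset_sum _ fun q _ =>
        hinner_int p.2 p.1 q.2 q.1
    exact this.congr (Filter.Eventually.of_forall fun ω => (hpt ω).symm)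
  -- bound on E‖S‖²
  have hSsq_bound : ∫ ω, ‖S ω‖ ^ 2 ∂μ ≤ (k+1) * n * σ ^ 2 := by
    have h1 : ∫ ω, ‖S ω‖ ^ 2 ∂μ = ∑ p ∈ P, ∑ q ∈ P,
        ∫ ω, (inner ℝ (z p.2 p.1 ω) (z q.2 q.1 ω) : ℝ) ∂μ := by
      rw [integral_congr_ae (Filter.Eventually.of_forall hpt)]
      rw [integral_finset_sum _ fun p _ => integrable_finset_sum _ fun q _ =>
        hinner_int p.2 p.1 q.2 q.1]
      exact Finset.sum_congr rfl fun p _ =>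
        integral_finset_sum _ fun q _ => hinner_int p.2 p.1 q.2 q.1
    rw [h1]
    have h2 : ∀ p ∈ P, (∑ q ∈ P, ∫ ω, (inner ℝ (z p.2 p.1 ω) (z q.2 q.1 ω) : ℝ) ∂μ)
        ≤ σ ^ 2 := by
      intro p hp
      have h3 : (∑ q ∈ P, ∫ ω, (inner ℝ (z p.2 p.1 ω) (z q.2 q.1 ω) : ℝ) ∂μ)
          = ∫ ω, (inner ℝ (z p.2 p.1 ω) (z p.2 p.1 ω) : ℝ) ∂μ := by
        refine Finset.sum_eq_single_of_mem p hp fun q _ hqp => ?_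
        refine hzorth p.2 p.1 q.2 q.1 fun hcontr => hqp ?_
        simp only [Prod.mk.injEq] at hcontr
        exact Prod.ext hcontr.2.symm hcontr.1.symm
      rw [h3]
      have h4 : ∫ ω, (inner ℝ (z p.2 p.1 ω) (z p.2 p.1 ω) : ℝ) ∂μ
          = ∫ ω, ‖z p.2 p.1 ω‖ ^ 2 ∂μ :=
        integral_congr_ae (Filter.Eventually.of_forall fun ω =>
          real_inner_self_eq_norm_sq _)
      rw [h4]; exact hzvar p.2 p.1
    calc (∑ p ∈ P, ∑ q ∈ P, ∫ ω, (inner ℝ (z p.2 p.1 ω) (z q.2 q.1 ω) : ℝ) ∂μ)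
        ≤ ∑ _p ∈ P, σ ^ 2 := Finset.sum_le_sum h2
      _ = (k+1) * n * σ ^ 2 := by
          rw [Finset.sum_const, hP, Finset.card_product, Finset.card_range,
            Finset.card_univ, Fintype.card_fin]
          push_cast; ring
  -- E‖S‖ ≤ √(E‖S‖²)
  have hSmeas : AEStronglyMeasurable (fun ω => ‖S ω‖) μ :=
    ((Finset.measurable_sum P fun p _ => hzmeas p.2 p.1).norm).aestronglyMeasurable
  have hmem : MemLp (fun ω => ‖S ω‖) 2 μ := by
    rw [memLp_two_iff_integrable_sq hSmeas]
    exact hSsq_int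
  have hEnorm : ∫ ω, ‖S ω‖ ∂μ ≤ Real.sqrt (∫ ω, ‖S ω‖ ^ 2 ∂μ) := by
    have h := ProbabilityTheory.variance_nonneg (fun ω => ‖S ω‖) μ
    rw [ProbabilityTheory.variance_eq_sub hmem] at h
    simp only [Pi.pow_apply] at h
    have h2 : 0 ≤ ∫ ω, ‖S ω‖ ∂μ := integral_nonneg fun ω => norm_nonneg _
    calc ∫ ω, ‖S ω‖ ∂μ = Real.sqrt ((∫ ω, ‖S ω‖ ∂μ) ^ 2) := (Real.sqrt_sq h2).symm
      _ ≤ Real.sqrt (∫ ω, ‖S ω‖ ^ 2 ∂μ) := Real.sqrt_le_sqrt (by linarith)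
  -- put everything together
  have hc : 0 ≤ β / (n:ℝ) := le_of_lt (div_pos hβ hn')
  have hrw : ∀ ω, ‖ghat (k + 1) ω - (n : ℝ)⁻¹ • ∑ i, g i (k + 1) ω‖
      = (β / (n:ℝ)) * ‖S ω‖ := by
    intro ω
    rw [key (k+1) ω, hSsum ω, norm_smul, Real.norm_eq_abs, abs_of_nonneg hc]
  calc ∫ ω, ‖ghat (k + 1) ω - (n : ℝ)⁻¹ • ∑ i, g i (k + 1) ω‖ ∂μ
      = ∫ ω, (β / (n:ℝ)) * ‖S ω‖ ∂μ :=
        integral_congr_ae (Filter.Eventually.of_forall hrw)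
    _ = (β / (n:ℝ)) * ∫ ω, ‖S ω‖ ∂μ := integral_const_mul _ _
    _ ≤ (β / (n:ℝ)) * Real.sqrt (∫ ω, ‖S ω‖ ^ 2 ∂μ) := by
        exact mul_le_mul_of_nonneg_left hEnorm hc
    _ ≤ (β / (n:ℝ)) * Real.sqrt ((k+1) * n * σ ^ 2) := by
        exact mul_le_mul_of_nonneg_left (Real.sqrt_le_sqrt hSsq_bound) hc
    _ = Real.sqrt (β ^ 2 * (k + 1) * σ ^ 2 / n) := by
        rw [← Real.sqrt_sq hc, ← Real.sqrt_mul (sq_nonneg _)]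
        congr 1
        field_simp
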